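/- If K is a C1 field, then every algebraic extension of K is C1. In particular, if k is an algebraically closed field and τ is transcendental over k, then k(τ) is C1 (Tsen's theorem), and if char k = p > 0, then the perfect closure k(τ)^{p^{-∞}} is C1. -/

import Mathlib

open MvPolynomial

/-- A field `K` is `C1` (quasi-algebraically closed) if every homogeneous polynomial of
degree `d` in `n > d > 0` variables over `K` has a nontrivial zero in `Kⁿ`. -/
def IsC1 (K : Type*) [Field K] : Prop :=
  ∀ (n d : ℕ), 0 < d → d < n →
    ∀ F : MvPolynomial (Fin n) K, F.IsHomogeneous d →
      ∃ a : Fin n → K, a ≠ 0 ∧ MvPolynomial.eval a F = 0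



open scoped Classical

variable {σ : Type*} {R S : Type*}

section Helpers

lemma coeff_sum_monomial [CommSemiring R] (s : Finset (σ →₀ ℕ)) (c : (σ →₀ ℕ) → R) (ν : σ →₀ ℕ) :
    coeff ν (∑ μ ∈ s, monomial μ (c μ)) = if ν ∈ s then c ν else 0 := by
  rw [MvPolynomial.coeff_sum]
  simp only [coeff_monomial]
  rw [Finset.sum_ite_eq' s ν c]

/-- restrict coefficients along a ring hom -/
lemma exists_map_eq [CommSemiring R] [CommSemiring S] (f : R →+* S) (F : MvPolynomial σ S)
    (h : ∀ μ, coeff μ F ∈ Set.range f) : ∃ F₀ : MvPolynomial σ R, map f F₀ = F := by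
  choose c hc using h
  refine ⟨∑ μ ∈ F.support, monomial μ (c μ), ?_⟩
  rw [map_sum]
  simp only [map_monomial, hc]
  exact (F.as_sum).symm

lemma isHomogeneous_of_map [CommSemiring R] [CommSemiring S] (f : R →+* S)
    (hf : Function.Injective f) {F₀ : MvPolynomial σ R} {d : ℕ}
    (h : (map f F₀).IsHomogeneous d) : F₀.IsHomogeneous d := by
  intro μ hμ
  refine h ?_
  rw [coeff_map]
  intro h0
  exact hμ (hf (by simpa using h0))

end Helpers

section MapCoeff

variable {k : Type*} [CommSemiring k] [CommRing R] [Algebra k R]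

/-- Apply a `k`-linear functional to all coefficients of a polynomial over `R`. -/
noncomputable def mapCoeff (ℓ : R →ₗ[k] k) (P : MvPolynomial σ R) : MvPolynomial σ k :=
  ∑ μ ∈ P.support, monomial μ (ℓ (coeff μ P))

lemma coeff_mapCoeff (ℓ : R →ₗ[k] k) (P : MvPolynomial σ R) (ν : σ →₀ ℕ) :
    coeff ν (mapCoeff ℓ P) = ℓ (coeff ν P) := by
  rw [mapCoeff, coeff_sum_monomial]
  split_ifs with h
  · rfl
  · rw [notMem_support_iff.mp h, map_zero]

lemma isHomogeneous_mapCoeff (ℓ : R →ₗ[k] k) {P : MvPolynomial σ R} {d : ℕ}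
    (hP : P.IsHomogeneous d) : (mapCoeff ℓ P).IsHomogeneous d := by
  intro μ hμ
  rw [coeff_mapCoeff] at hμ
  exact hP (fun h0 => hμ (by rw [h0, map_zero]))

lemma eval_mapCoeff (ℓ : R →ₗ[k] k) (P : MvPolynomial σ R) (y : σ → k) :
    eval y (mapCoeff ℓ P) = ℓ (eval (fun v => algebraMap k R (y v)) P) := by
  conv_rhs => rw [P.as_sum]
  rw [map_sum, map_sum]
  rw [mapCoeff, map_sum]
  congr 1
  ext μ
  rw [eval_monomial, eval_monomial]
  have : (μ.prod fun n e => (algebraMap k R (y n)) ^ e)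
      = algebraMap k R (μ.prod fun n e => (y n) ^ e) := by
    rw [Finsupp.prod, Finsupp.prod, map_prod]
    simp [map_pow]
  rw [this, mul_comm (coeff μ P), ← Algebra.smul_def, map_smul, smul_eq_mul, mul_comm]

lemma homogeneousComponent_mul_homogeneous [CommSemiring R] (h G : MvPolynomial σ R)
    {dj e : ℕ} (hG : G.IsHomogeneous dj) (hdj : dj ≤ e) :
    homogeneousComponent e (h * G) = homogeneousComponent (e - dj) h * G := by
  conv_lhs => rw [← h.sum_homogeneousComponent]
  rw [Finset.sum_mul, map_sum]
  have key : ∀ i, homogeneousComponent e (homogeneousComponent i h * G)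
      = if i = e - dj then homogeneousComponent i h * G else 0 := by
    intro i
    have hmem : homogeneousComponent i h * G ∈ homogeneousSubmodule σ R (i + dj) :=
      (homogeneousComponent_isHomogeneous i h).mul hG
    rw [homogeneousComponent_of_mem hmem]
    congr 1
    apply propext
    constructor <;> intro hh <;> omega
  simp only [key]
  rw [Finset.sum_ite_eq' (Finset.range (h.totalDegree + 1)) (e - dj)
    (fun i => homogeneousComponent i h * G)]
  split_ifs with h1
  · rfl
  · rw [Finset.mem_range, not_lt] at h1
    rw [homogeneousComponent_eq_zero _ _ (by omega), zero_mul]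

section KeyLemma

variable {k : Type*} [Field k] [IsAlgClosed k]

lemma key_lemma {σ : Type*} [Fintype σ] {r : ℕ} (hr : r < Fintype.card σ)
    (G : Fin r → MvPolynomial σ k) (d : Fin r → ℕ) (hd : ∀ j, 0 < d j)
    (hG : ∀ j, (G j).IsHomogeneous (d j)) :
    ∃ x : σ → k, x ≠ 0 ∧ ∀ j, eval x (G j) = 0 := by
  by_contra hcon
  push_neg at hcon
  set N := Fintype.card σ with hN
  set I : Ideal (MvPolynomial σ k) := Ideal.span (Set.range G) with hI
  have hXrad : ∀ i : σ, (X i : MvPolynomial σ k) ∈ I.radical := by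
    intro i
    rw [← vanishingIdeal_zeroLocus_eq_radical (K := k), mem_vanishingIdeal_iff]
    intro x hx
    have hx0 : x = 0 := by
      by_contra hx0
      obtain ⟨j, hj⟩ := hcon x hx0
      exact hj ((mem_zeroLocus_iff.mp hx) _ (Ideal.subset_span ⟨j, rfl⟩))
    simp [hx0]
  have hXm : ∀ i : σ, ∃ m, (X i : MvPolynomial σ k) ^ m ∈ I := by
    intro i
    exact Ideal.mem_radical_iff.mp (hXrad i)
  choose mf hmf using hXm
  set m : ℕ := (Finset.univ.sup mf) + 1 with hm
  have hXmI : ∀ i : σ, (X i : MvPolynomial σ k) ^ m ∈ I := by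
    intro i
    have h1 : mf i ≤ m := le_trans (Finset.le_sup (Finset.mem_univ i)) (Nat.le_succ _)
    have : (X i : MvPolynomial σ k) ^ m
        = X i ^ (m - mf i) * X i ^ mf i := by rw [← pow_add]; congr 1; omega
    rw [this]
    exact Ideal.mul_mem_left _ _ (hmf i)
  set dmax : ℕ := Finset.univ.sup d with hdmax
  set E : ℕ := N * (m - 1) + dmax with hE
  -- every monomial of degree > E lies in I
  have hbig : ∀ μ : σ →₀ ℕ, E < μ.degree → (monomial μ 1 : MvPolynomial σ k) ∈ I := by
    intro μ hμ
    have hex : ∃ i, m ≤ μ i := by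
      by_contra hno
      push_neg at hno
      have h1 : μ.degree ≤ ∑ i : σ, μ i :=
        Finset.sum_le_sum_of_subset (Finset.subset_univ _)
      have h2 : ∑ i : σ, μ i ≤ ∑ _i : σ, (m - 1) :=
        Finset.sum_le_sum (fun i _ => by have := hno i; omega)
      simp only [Finset.sum_const, Finset.card_univ, smul_eq_mul] at h2
      rw [← hN] at h2
      omega
    obtain ⟨i, him⟩ := hex
    have hfs : (μ - Finsupp.single i m) + Finsupp.single i m = μ := by
      ext a
      rw [Finsupp.add_apply, Finsupp.tsub_apply, Finsupp.single_apply]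
      by_cases ha : i = a
      · subst ha; simp; omega
      · simp [ha]
    have hsplit : (monomial μ 1 : MvPolynomial σ k)
        = monomial (μ - Finsupp.single i m) 1 * X i ^ m := by
      rw [X_pow_eq_monomial, monomial_mul, mul_one, hfs]
    rw [hsplit]
    exact Ideal.mul_mem_left _ _ (hXmI i)
  -- the spanning sets
  set T : ℕ → Set (MvPolynomial σ k) := fun e =>
    {q | ∃ (α : Fin r → ℕ) (β : σ →₀ ℕ), (∑ j, α j * d j) + β.degree ≤ e ∧ β.degree ≤ E ∧
      q = (∏ j, G j ^ α j) * monomial β 1} with hT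
  have claim : ∀ e, ∀ μ : σ →₀ ℕ, μ.degree ≤ e →
      (monomial μ 1 : MvPolynomial σ k) ∈ Submodule.span k (T e) := by
    intro e
    induction e using Nat.strong_induction_on with
    | _ e IH =>
      intro μ hμ
      by_cases hcase : μ.degree ≤ E
      · refine Submodule.subset_span ⟨fun _ => 0, μ, by simpa using hμ, hcase, by simp⟩
      · push_neg at hcase
        have hmem := hbig μ hcase
        rw [hI, Ideal.mem_span_range_iff_exists_fun] at hmem
        obtain ⟨h, hh⟩ := hmem
        set e' := μ.degree with he'
        have hdjE : ∀ j, d j ≤ E := fun j =>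
          le_trans (Finset.le_sup (Finset.mem_univ j)) (Nat.le_add_left _ _)
        have hdj_le : ∀ j, d j ≤ e' := fun j => le_trans (hdjE j) (le_of_lt hcase)
        have hrep : (monomial μ 1 : MvPolynomial σ k)
            = ∑ j, homogeneousComponent (e' - d j) (h j) * G j := by
          have h0 : (monomial μ 1 : MvPolynomial σ k)
              = homogeneousComponent e' (monomial μ 1) := by
            rw [homogeneousComponent_of_mem
              ((mem_homogeneousSubmodule _ _).mpr (isHomogeneous_monomial (1 : k) he'.symm))]
            simp
          rw [h0, ← hh, map_sum]
          exact Finset.sum_congr rfl fun j _ =>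
            homogeneousComponent_mul_homogeneous (h j) (G j) (hG j) (hdj_le j)
        rw [hrep]
        apply Submodule.sum_mem
        intro j _
        set p := homogeneousComponent (e' - d j) (h j) with hp
        rw [p.as_sum, Finset.sum_mul]
        apply Submodule.sum_mem
        intro β hβ
        have hβdeg : β.degree = e' - d j := by
          by_contra hne
          exact (mem_support_iff.mp hβ)
            ((homogeneousComponent_isHomogeneous (e' - d j) (h j)).coeff_eq_zero hne)
        have heq : (monomial β (coeff β p) : MvPolynomial σ k) * G j
            = coeff β p • ((monomial β 1 : MvPolynomial σ k) * G j) := by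
          rw [← smul_mul_assoc, smul_monomial, smul_eq_mul, mul_one]
        rw [heq]
        apply Submodule.smul_mem
        have hd' : 0 < d j := hd j
        have he'pos : 0 < e' := by omega
        have hIH := IH (e' - d j) (by omega) β (le_of_eq hβdeg)
        have hmul := Submodule.apply_mem_span_image_of_mem_span
          (LinearMap.mulLeft k (G j)) hIH
        have himg : (LinearMap.mulLeft k (G j)) '' (T (e' - d j)) ⊆ T e := by
          rintro q ⟨q', ⟨α, β', hsum, hβ'E, rfl⟩, rfl⟩
          refine ⟨fun i => α i + (if i = j then 1 else 0), β', ?_, hβ'E, ?_⟩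
          · beta_reduce
            have hsum2 : (∑ i, (α i + (if i = j then 1 else 0)) * d i)
                = (∑ i, α i * d i) + d j := by
              simp only [add_mul, Finset.sum_add_distrib]
              congr 1
              have : ∀ i : Fin r, (if i = j then 1 else 0) * d i
                  = (if i = j then d i else 0) := by
                intro i; split_ifs <;> simp
              simp only [this]
              rw [Finset.sum_ite_eq' Finset.univ j d]
              simp
            rw [hsum2]
            have h3 : d j ≤ e' := hdj_le j
            have h4 : 0 < d j := hd j
            omega
          · beta_reduce
            have hprod : (∏ i, G i ^ (α i + (if i = j then 1 else 0)))
                = (∏ i, G i ^ α i) * G j := by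
              simp only [pow_add, Finset.prod_mul_distrib]
              congr 1
              rw [Finset.prod_eq_single j]
              · simp
              · intro i _ hne; simp [hne]
              · intro habs; exact absurd (Finset.mem_univ j) habs
            rw [hprod, LinearMap.mulLeft_apply]
            ring
        have := (Submodule.span_mono himg) hmul
        rw [LinearMap.mulLeft_apply, mul_comm] at this
        exact this
  -- counting
  set K0 : ℕ := N ^ r * (E + 1) ^ N with hK0
  set e : ℕ := N * K0 with he
  set fam : (σ → Fin (K0 + 1)) → MvPolynomial σ k := fun f =>
    monomial (Finsupp.equivFunOnFinite.symm fun i => (f i : ℕ)) 1 with hfam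
  have hfam_indep : LinearIndependent k fam := by
    have hinj : Function.Injective
        (fun f : σ → Fin (K0 + 1) => Finsupp.equivFunOnFinite.symm fun i => (f i : ℕ)) := by
      intro f g hfg
      have h2 : (fun i => ((f i : ℕ))) = fun i => ((g i : ℕ)) :=
        Finsupp.equivFunOnFinite.symm.injective hfg
      funext i
      exact Fin.val_injective (congrFun h2 i)
    have := (basisMonomials σ k).linearIndependent.comp _ hinj
    simp only [coe_basisMonomials] at this
    exact this
  have hfam_mem : ∀ f, fam f ∈ Submodule.span k (T e) := by
    intro f
    apply claim
    have hdeg : (Finsupp.equivFunOnFinite.symm fun i => (f i : ℕ)).degree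
        ≤ ∑ i : σ, ((f i : ℕ)) := by
      apply Finset.sum_le_sum_of_subset (Finset.subset_univ _)
    refine hdeg.trans ?_
    calc (∑ i : σ, ((f i : ℕ))) ≤ ∑ _i : σ, K0 :=
          Finset.sum_le_sum (fun i _ => Nat.lt_succ_iff.mp (f i).isLt)
      _ = N * K0 := by rw [Finset.sum_const, Finset.card_univ, ← hN, smul_eq_mul]
  set ψ : (Fin r → Fin (e + 1)) × (σ → Fin (E + 1)) → MvPolynomial σ k := fun z =>
    (∏ j, G j ^ (z.1 j : ℕ)) * monomial (Finsupp.equivFunOnFinite.symm fun i => (z.2 i : ℕ)) 1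
    with hψ
  have hTsub : T e ⊆ ↑(Finset.image ψ Finset.univ) := by
    rintro q ⟨α, β, hsum, hβE, rfl⟩
    have hα : ∀ j, α j ≤ e := by
      intro j
      have h1 : α j * d j ≤ e :=
        le_trans (le_trans (Finset.single_le_sum (f := fun j => α j * d j)
          (fun _ _ => Nat.zero_le _) (Finset.mem_univ j)) (Nat.le_add_right _ _)) hsum
      have h2 : α j ≤ α j * d j := Nat.le_mul_of_pos_right _ (hd j)
      omega
    have hβ : ∀ i, β i ≤ E := fun i => (Finsupp.le_degree i β).trans hβE
    refine Finset.mem_coe.mpr (Finset.mem_image.mpr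
      ⟨(fun j => ⟨α j, by have := hα j; omega⟩, fun i => ⟨β i, by have := hβ i; omega⟩),
        Finset.mem_univ _, ?_⟩)
    simp only [hψ]
    have hb : (Finsupp.equivFunOnFinite.symm fun i => β i) = β :=
      Finsupp.equivFunOnFinite_symm_coe β
    simp [hb]
  have h1 : Fintype.card (σ → Fin (K0 + 1)) ≤ (Finset.image ψ Finset.univ).card := by
    have hind := linearIndependent_iff_card_le_finrank_span.mp hfam_indep
    refine hind.trans ?_
    have hfin : ((Finset.image ψ Finset.univ : Finset (MvPolynomial σ k))
        : Set (MvPolynomial σ k)).Finite := Finset.finite_toSet _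
    haveI : Module.Finite k
        (Submodule.span k ((Finset.image ψ Finset.univ : Finset (MvPolynomial σ k))
          : Set (MvPolynomial σ k))) := Module.Finite.span_of_finite k hfin
    have hle : Submodule.span k (Set.range fam)
        ≤ Submodule.span k ((Finset.image ψ Finset.univ : Finset (MvPolynomial σ k))
          : Set (MvPolynomial σ k)) := by
      rw [Submodule.span_le]
      rintro _ ⟨f, rfl⟩
      exact Submodule.span_mono hTsub (hfam_mem f)
    exact (Submodule.finrank_mono hle).trans (finrank_span_finset_le_card _)
  have h2 : (Finset.image ψ Finset.univ).card
      ≤ (e + 1) ^ r * (E + 1) ^ N := by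
    refine Finset.card_image_le.trans ?_
    rw [Finset.card_univ, Fintype.card_prod, Fintype.card_fun, Fintype.card_fun,
      Fintype.card_fin, Fintype.card_fin, Fintype.card_fin, ← hN]
  have hcard1 : Fintype.card (σ → Fin (K0 + 1)) = (K0 + 1) ^ N := by
    rw [Fintype.card_fun, Fintype.card_fin, ← hN]
  have harith : (e + 1) ^ r * (E + 1) ^ N < (K0 + 1) ^ N := by
    have hN1 : 1 ≤ N := by omega
    calc (e + 1) ^ r * (E + 1) ^ N ≤ (N * (K0 + 1)) ^ r * (E + 1) ^ N := by
          refine Nat.mul_le_mul_right _ (Nat.pow_le_pow_left ?_ r)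
          have : N * (K0 + 1) = N * K0 + N := by ring
          omega
      _ = K0 * (K0 + 1) ^ r := by rw [mul_pow, hK0]; ring
      _ < (K0 + 1) * (K0 + 1) ^ r := by
          have hpos : 0 < (K0 + 1) ^ r := pow_pos (Nat.succ_pos K0) r
          exact mul_lt_mul_of_pos_right (Nat.lt_succ_self K0) hpos
      _ = (K0 + 1) ^ (r + 1) := by ring
      _ ≤ (K0 + 1) ^ N := Nat.pow_le_pow_right (Nat.succ_le_succ (Nat.zero_le _)) (by omega)
  omega

end KeyLemma

section DegBound

variable {τ : Type*} {k : Type*} [CommRing k]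

/-- all coefficients (in `k[t]`) have degree at most `a` -/
def CoeffDegLE (a : ℕ) (q : MvPolynomial τ (Polynomial k)) : Prop :=
  ∀ μ, (coeff μ q).natDegree ≤ a

lemma CoeffDegLE.sum {ι : Type*} (s : Finset ι) (f : ι → MvPolynomial τ (Polynomial k)) (a : ℕ)
    (h : ∀ i ∈ s, CoeffDegLE a (f i)) : CoeffDegLE a (∑ i ∈ s, f i) := by
  intro μ
  rw [MvPolynomial.coeff_sum]
  exact Polynomial.natDegree_sum_le_of_forall_le _ _ (fun i hi => h i hi μ)

lemma CoeffDegLE.mul {q1 q2 : MvPolynomial τ (Polynomial k)} {a b : ℕ}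
    (h1 : CoeffDegLE a q1) (h2 : CoeffDegLE b q2) : CoeffDegLE (a + b) (q1 * q2) := by
  intro μ
  rw [MvPolynomial.coeff_mul]
  apply Polynomial.natDegree_sum_le_of_forall_le
  intro x _
  exact Polynomial.natDegree_mul_le.trans (add_le_add (h1 _) (h2 _))

lemma CoeffDegLE.one : CoeffDegLE (k := k) (τ := τ) 0 1 := by
  intro μ
  rw [MvPolynomial.coeff_one]
  split_ifs <;> simp

lemma CoeffDegLE.pow {q : MvPolynomial τ (Polynomial k)} {a : ℕ} (h : CoeffDegLE a q) (n : ℕ) :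
    CoeffDegLE (n * a) (q ^ n) := by
  induction n with
  | zero => simpa using CoeffDegLE.one
  | succ n ih =>
      have h2 := ih.mul h
      rw [← pow_succ] at h2
      have h3 : (n + 1) * a = n * a + a := by ring
      rw [h3]
      exact h2

lemma CoeffDegLE.prod {ι : Type*} (s : Finset ι) (f : ι → MvPolynomial τ (Polynomial k))
    (a : ι → ℕ) (h : ∀ i ∈ s, CoeffDegLE (a i) (f i)) :
    CoeffDegLE (∑ i ∈ s, a i) (∏ i ∈ s, f i) := by
  induction s using Finset.induction with
  | empty => simpa using CoeffDegLE.one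
  | insert i s' hi ih =>
      rw [Finset.sum_insert hi, Finset.prod_insert hi]
      exact (h i (Finset.mem_insert_self _ _)).mul
        (ih (fun j hj => h j (Finset.mem_insert_of_mem hj)))

lemma CoeffDegLE.mono {q : MvPolynomial τ (Polynomial k)} {a b : ℕ} (hab : a ≤ b)
    (h : CoeffDegLE a q) : CoeffDegLE b q := fun μ => (h μ).trans hab

lemma CoeffDegLE.C {c : Polynomial k} : CoeffDegLE (τ := τ) c.natDegree (MvPolynomial.C c) := by
  intro μ
  rw [MvPolynomial.coeff_C]
  split_ifs <;> simp

lemma CoeffDegLE.monomial {c : Polynomial k} {ν : τ →₀ ℕ} :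
    CoeffDegLE c.natDegree (MvPolynomial.monomial ν c) := by
  intro μ
  rw [MvPolynomial.coeff_monomial]
  split_ifs <;> simp

end DegBound

theorem tsen (k : Type*) [Field k] [IsAlgClosed k] : IsC1 (RatFunc k) := by
  intro n d hd hn F hF
  set K := RatFunc k with hK
  have hinj : Function.Injective (algebraMap (Polynomial k) K) :=
    IsFractionRing.injective _ _
  -- clear denominators
  set D : Polynomial k := ∏ μ ∈ F.support, (coeff μ F).denom with hD
  have hD0 : D ≠ 0 := by
    rw [hD]
    exact Finset.prod_ne_zero_iff.mpr fun μ _ => RatFunc.denom_ne_zero _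
  have hdenom : ∀ x : K, algebraMap (Polynomial k) K x.denom * x = algebraMap _ K x.num := by
    intro x
    have hden0 : algebraMap (Polynomial k) K x.denom ≠ 0 :=
      (map_ne_zero_iff _ hinj).mpr (RatFunc.denom_ne_zero x)
    have h1 := RatFunc.num_div_denom x
    rw [div_eq_iff hden0] at h1
    rw [mul_comm]
    exact h1.symm
  have hrange : ∀ μ, coeff μ (MvPolynomial.C (algebraMap (Polynomial k) K D) * F)
      ∈ Set.range (algebraMap (Polynomial k) K) := by
    intro μ
    rw [coeff_C_mul]
    by_cases hμ : μ ∈ F.support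
    · refine ⟨(∏ ν ∈ F.support.erase μ, (coeff ν F).denom) * (coeff μ F).num, ?_⟩
      rw [map_mul]
      have hDsplit : D = (coeff μ F).denom * ∏ ν ∈ F.support.erase μ, (coeff ν F).denom :=
        (Finset.mul_prod_erase _ _ hμ).symm
      rw [hDsplit, map_mul, mul_assoc, mul_comm (algebraMap (Polynomial k) K _) (coeff μ F),
        ← mul_assoc, mul_comm (algebraMap (Polynomial k) K (coeff μ F).denom), mul_assoc,
        ← hdenom (coeff μ F)]
      ring
    · rw [MvPolynomial.notMem_support_iff.mp hμ, mul_zero]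
      exact ⟨0, map_zero _⟩
  obtain ⟨F'', hF''⟩ := exists_map_eq _ _ hrange
  have hGhom : (MvPolynomial.C (algebraMap (Polynomial k) K D) * F).IsHomogeneous d :=
    hF.C_mul _
  have hF''hom : F''.IsHomogeneous d := isHomogeneous_of_map _ hinj (by rw [hF'']; exact hGhom)
  -- degrees of coefficients
  set r0 : ℕ := F''.support.sup fun μ => (coeff μ F'').natDegree with hr0def
  have hr0 : ∀ μ, (coeff μ F'').natDegree ≤ r0 := by
    intro μ
    by_cases hμ : μ ∈ F''.support
    · exact Finset.le_sup (f := fun μ => (coeff μ F'').natDegree) hμ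
    · rw [MvPolynomial.notMem_support_iff.mp hμ]; simp
  set s : ℕ := r0 + 1 with hsdef
  set g : Fin n → MvPolynomial (Fin n × Fin (s + 1)) (Polynomial k) := fun i =>
    ∑ j : Fin (s + 1), MvPolynomial.C (Polynomial.X ^ (j : ℕ)) * X (i, j) with hg
  set P : MvPolynomial (Fin n × Fin (s + 1)) (Polynomial k) := bind₁ g F'' with hP
  have hghom : ∀ i, (g i).IsHomogeneous 1 := by
    intro i
    exact IsHomogeneous.sum _ _ _ (fun j _ => isHomogeneous_C_mul_X _ _)
  have hPhom : P.IsHomogeneous d := by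
    have := hF''hom.aeval g hghom
    rw [one_mul] at this
    exact this
  have hgdeg : ∀ i, CoeffDegLE s (g i) := by
    intro i
    apply CoeffDegLE.sum
    intro j _
    have h1 : CoeffDegLE ((Polynomial.X ^ (j : ℕ) : Polynomial k).natDegree)
        (MvPolynomial.C (Polynomial.X ^ (j : ℕ)) :
          MvPolynomial (Fin n × Fin (s + 1)) (Polynomial k)) := CoeffDegLE.C
    have h2 : CoeffDegLE 0 (X (i, j) : MvPolynomial (Fin n × Fin (s + 1)) (Polynomial k)) := by
      have := CoeffDegLE.monomial (k := k) (c := (1 : Polynomial k))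
        (ν := Finsupp.single ((i, j) : Fin n × Fin (s + 1)) 1)
      simpa [X] using this
    have := h1.mul h2
    rw [add_zero] at this
    refine this.mono ?_
    rw [Polynomial.natDegree_X_pow]
    exact Nat.lt_succ_iff.mp (j : Fin (s+1)).isLt
  -- coefficient degree bound for P
  set M : ℕ := r0 + s * d with hMdef
  have hPdeg : CoeffDegLE M P := by
    rw [hP, F''.as_sum, map_sum]
    apply CoeffDegLE.sum
    intro μ hμ
    rw [bind₁_monomial]
    have hdegμ : Finsupp.degree μ = d := by
      by_contra hne
      exact (mem_support_iff.mp hμ) (hF''hom.coeff_eq_zero hne)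
    have h1 : CoeffDegLE ((coeff μ F'').natDegree)
        (MvPolynomial.C (coeff μ F'') :
          MvPolynomial (Fin n × Fin (s + 1)) (Polynomial k)) := CoeffDegLE.C
    have h2 : CoeffDegLE (∑ i ∈ μ.support, μ i * s) (∏ i ∈ μ.support, g i ^ μ i) :=
      CoeffDegLE.prod _ _ _ (fun i _ => (hgdeg i).pow (μ i))
    have h3 := h1.mul h2
    refine h3.mono ?_
    have h4 : (∑ i ∈ μ.support, μ i * s) = d * s := by
      rw [← Finset.sum_mul]
      exact congrArg (fun t => t * s) hdegμ
    rw [h4, hMdef]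
    have := hr0 μ
    have hsd : d * s = s * d := by ring
    omega
  -- the system of equations over k
  set Q : Fin (M + 1) → MvPolynomial (Fin n × Fin (s + 1)) k := fun c =>
    mapCoeff (Polynomial.lcoeff k (c : ℕ)) P with hQ
  have hQhom : ∀ c, (Q c).IsHomogeneous d := fun c => isHomogeneous_mapCoeff _ hPhom
  have hcard : M + 1 < Fintype.card (Fin n × Fin (s + 1)) := by
    rw [Fintype.card_prod, Fintype.card_fin, Fintype.card_fin]
    have h1 : (d + 1) * (s + 1) ≤ n * (s + 1) := Nat.mul_le_mul_right _ hn
    have h2 : (d + 1) * (s + 1) = d * s + d + s + 1 := by ring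
    have h3 : s * d = d * s := by ring
    omega
  obtain ⟨y, hy0, hy⟩ := key_lemma hcard Q (fun _ => d) (fun _ => hd) hQhom
  -- build the polynomial solution
  set a : Fin n → Polynomial k := fun i =>
    ∑ j, Polynomial.C (y (i, j)) * Polynomial.X ^ (j : ℕ) with ha
  set z : Polynomial k := eval (fun v => Polynomial.C (y v)) P with hz
  have hza : z = eval a F'' := by
    rw [hz, hP]
    have := eval₂Hom_bind₁ (RingHom.id (Polynomial k)) (fun v => Polynomial.C (y v)) g F''
    rw [show (eval (fun v => Polynomial.C (y v)) : MvPolynomial (Fin n × Fin (s+1)) (Polynomial k) →+* Polynomial k) = eval₂Hom (RingHom.id (Polynomial k)) (fun v => Polynomial.C (y v)) from rfl, this]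
    have hgi : ∀ i, (eval₂Hom (RingHom.id (Polynomial k)) (fun v => Polynomial.C (y v))) (g i) = a i := by
      intro i
      rw [hg, ha]
      simp only [map_sum, map_mul, eval₂Hom_C, eval₂Hom_X', RingHom.id_apply]
      exact Finset.sum_congr rfl fun j _ => by ring
    rw [show (fun i => (eval₂Hom (RingHom.id (Polynomial k)) (fun v => Polynomial.C (y v))) (g i)) = a from funext hgi]
    rfl
  have hzdeg : z.natDegree ≤ M := by
    rw [hz, eval_eq]
    apply Polynomial.natDegree_sum_le_of_forall_le
    intro μ _
    refine Polynomial.natDegree_mul_le.trans ?_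
    have h1 : (∏ i ∈ μ.support, (Polynomial.C (y i)) ^ μ i).natDegree = 0 := by
      have : (∏ i ∈ μ.support, (Polynomial.C (y i)) ^ μ i)
          = Polynomial.C (∏ i ∈ μ.support, (y i) ^ μ i) := by
        rw [map_prod]
        simp [map_pow]
      rw [this, Polynomial.natDegree_C]
    rw [h1, add_zero]
    exact hPdeg μ
  have hzero : z = 0 := by
    ext c
    rw [Polynomial.coeff_zero]
    by_cases hc : c ≤ M
    · have := hy ⟨c, by omega⟩
      rw [hQ] at this
      rw [eval_mapCoeff] at this
      rw [show (algebraMap k (Polynomial k)) = Polynomial.C from Polynomial.algebraMap_eq] at this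
      rw [← hz] at this
      simpa [Polynomial.lcoeff_apply] using this
    · exact Polynomial.coeff_eq_zero_of_natDegree_lt (by omega)
  have hevalF'' : eval a F'' = 0 := by rw [← hza, hzero]
  -- transfer to RatFunc
  refine ⟨fun i => algebraMap (Polynomial k) K (a i), ?_, ?_⟩
  · intro h0
    rw [_root_.funext_iff] at h0
    obtain ⟨⟨i, j⟩, hyv⟩ := Function.ne_iff.mp hy0
    have hai : a i = 0 := hinj (by simpa using h0 i)
    apply hyv
    have := congrArg (fun q => Polynomial.coeff q (j : ℕ)) hai
    simp only [ha] at this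
    rw [Polynomial.finset_sum_coeff] at this
    simp only [Polynomial.coeff_C_mul, Polynomial.coeff_X_pow] at this
    rw [Finset.sum_eq_single j] at this
    · simpa using this
    · intro j' _ hne
      have : ((j : ℕ) = (j' : ℕ)) = False := by
        simp only [eq_iff_iff, iff_false]
        exact fun hval => hne (Fin.val_injective hval.symm)
      simp [this]
    · intro habs; exact absurd (Finset.mem_univ j) habs
  · have hcomm : eval (fun i => algebraMap (Polynomial k) K (a i)) (map (algebraMap (Polynomial k) K) F'')
        = algebraMap (Polynomial k) K (eval a F'') := by
      rw [eval_map]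
      rw [show (eval a F'') = eval₂ (RingHom.id _) a F'' from rfl]
      rw [eval₂_comp_left (algebraMap (Polynomial k) K) (RingHom.id _) a F'']
      simp only [RingHom.comp_id]
      rfl
    rw [hF''] at hcomm
    rw [hevalF''] at hcomm
    rw [map_zero] at hcomm
    have hD0' : algebraMap (Polynomial k) K D ≠ 0 := (map_ne_zero_iff _ hinj).mpr hD0
    rw [map_mul, eval_C] at hcomm
    exact (mul_eq_zero.mp hcomm).resolve_left hD0'

lemma IsC1.exists_root {K : Type*} [Field K] (hK : IsC1 K) {σ : Type*} [Fintype σ] {d : ℕ}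
    (hd : 0 < d) (hn : d < Fintype.card σ) (F : MvPolynomial σ K) (hF : F.IsHomogeneous d) :
    ∃ a : σ → K, a ≠ 0 ∧ eval a F = 0 := by
  set e := Fintype.equivFin σ with he
  obtain ⟨a, ha0, haz⟩ := hK (Fintype.card σ) d hd hn (rename e F) (hF.rename_isHomogeneous)
  rw [eval_rename] at haz
  refine ⟨a ∘ e, ?_, haz⟩
  intro h0
  apply ha0
  funext x
  have h1 : a (e (e.symm x)) = 0 := congrFun h0 (e.symm x)
  simpa using h1

section NormPoly

variable {K L : Type*} [Field K] [Field L] [Algebra K L] [FiniteDimensional K L]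
variable {m : ℕ}

/-- The norm form of a finite field extension w.r.t. a basis. -/
noncomputable def normPoly (b : Module.Basis (Fin m) K L) : MvPolynomial (Fin m) K :=
  Matrix.det (Matrix.of fun s t => ∑ j, Algebra.leftMulMatrix b (b j) s t • X j)

lemma normPoly_isHomogeneous (b : Module.Basis (Fin m) K L) : (normPoly b).IsHomogeneous m := by
  rw [normPoly, Matrix.det_apply]
  apply IsHomogeneous.sum
  intro σ _
  have h1 : ∀ i : Fin m, ((Matrix.of fun s t =>
      ∑ j, Algebra.leftMulMatrix b (b j) s t • (X j : MvPolynomial (Fin m) K)) (σ i) i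
      ).IsHomogeneous 1 := by
    intro i
    simp only [Matrix.of_apply]
    refine IsHomogeneous.sum _ _ _ (fun j _ => ?_)
    rw [smul_eq_C_mul]
    exact isHomogeneous_C_mul_X _ _
  have h2 := IsHomogeneous.prod Finset.univ _ (fun _ => (1 : ℕ)) (fun i _ => h1 i)
  have h3 : (∑ _i : Fin m, (1 : ℕ)) = m := by simp
  rw [h3] at h2
  rcases Int.units_eq_one_or (Equiv.Perm.sign σ) with h | h <;> rw [h]
  · simpa using h2
  · have : ((-1 : ℤˣ) : ℤ) • (∏ i, (Matrix.of fun s t =>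
        ∑ j, Algebra.leftMulMatrix b (b j) s t • (X j : MvPolynomial (Fin m) K)) (σ i) i)
        = -(∏ i, (Matrix.of fun s t =>
        ∑ j, Algebra.leftMulMatrix b (b j) s t • (X j : MvPolynomial (Fin m) K)) (σ i) i) := by
      simp
    rw [Units.smul_def, this]
    exact h2.neg

lemma eval_normPoly (b : Module.Basis (Fin m) K L) (y : Fin m → K) :
    eval y (normPoly b) = Algebra.norm K (∑ j, y j • b j) := by
  rw [normPoly, RingHom.map_det, RingHom.mapMatrix_apply, Algebra.norm_eq_matrix_det b]
  congr 1
  ext s t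
  rw [Matrix.map_apply, Matrix.of_apply]
  have hlin : Algebra.leftMulMatrix b (∑ j, y j • b j) s t
      = ∑ j, y j • Algebra.leftMulMatrix b (b j) s t := by
    rw [map_sum]
    simp [Matrix.sum_apply]
  rw [hlin]
  rw [map_sum]
  congr 1
  ext j
  rw [smul_eq_C_mul, map_mul, eval_C, eval_X, smul_eq_mul, mul_comm]

end NormPoly

theorem lang_finite {K : Type*} [Field K] (hK : IsC1 K) (L : Type*) [Field L] [Algebra K L]
    [FiniteDimensional K L] {n d : ℕ} (hd : 0 < d) (hn : d < n)
    (F : MvPolynomial (Fin n) L) (hF : F.IsHomogeneous d) :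
    ∃ a : Fin n → L, a ≠ 0 ∧ eval a F = 0 := by
  set m := Module.finrank K L with hm
  have hm0 : 0 < m := Module.finrank_pos
  set b : Module.Basis (Fin m) K L := Module.finBasis K L with hb
  set g : Fin n → MvPolynomial (Fin n × Fin m) L := fun i =>
    ∑ j : Fin m, C (b j) * X (i, j) with hg
  set P : MvPolynomial (Fin n × Fin m) L := bind₁ g F with hP
  have hghom : ∀ i, (g i).IsHomogeneous 1 := fun i =>
    IsHomogeneous.sum _ _ _ (fun j _ => isHomogeneous_C_mul_X _ _)
  have hPhom : P.IsHomogeneous d := by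
    have := hF.aeval g hghom
    rw [one_mul] at this
    exact this
  set Q : Fin m → MvPolynomial (Fin n × Fin m) K := fun t => mapCoeff (b.coord t) P with hQ
  have hQhom : ∀ t, (Q t).IsHomogeneous d := fun t => isHomogeneous_mapCoeff _ hPhom
  set big : MvPolynomial (Fin n × Fin m) K := bind₁ Q (normPoly b) with hbig
  have hbighom : big.IsHomogeneous (d * m) := (normPoly_isHomogeneous b).aeval Q hQhom
  have hdm0 : 0 < d * m := Nat.mul_pos hd hm0
  have hdmlt : d * m < Fintype.card (Fin n × Fin m) := by
    rw [Fintype.card_prod, Fintype.card_fin, Fintype.card_fin]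
    exact Nat.mul_lt_mul_of_lt_of_le hn (le_refl m) hm0
  obtain ⟨y, hy0, hyz⟩ := hK.exists_root hdm0 hdmlt big hbighom
  -- unwind
  set c : Fin m → K := fun t => eval y (Q t) with hc
  have h1 : eval y big = eval c (normPoly b) := by
    rw [hbig]
    have := eval₂Hom_bind₁ (RingHom.id K) y Q (normPoly b)
    rw [show (eval y : MvPolynomial (Fin n × Fin m) K →+* K)
      = eval₂Hom (RingHom.id K) y from rfl, this]
    rfl
  set z : L := eval (fun v => algebraMap K L (y v)) P with hz
  have h2 : ∀ t, c t = b.repr z t := by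
    intro t
    rw [hc]
    beta_reduce
    rw [hQ]
    beta_reduce
    rw [eval_mapCoeff]
    rw [Module.Basis.coord_apply]
  have h3 : (∑ t, c t • b t) = z := by
    calc (∑ t, c t • b t) = ∑ t, b.repr z t • b t :=
          Finset.sum_congr rfl (fun t _ => by rw [h2 t])
      _ = z := b.sum_repr z
  have hnorm : Algebra.norm K z = 0 := by
    rw [← h3, ← eval_normPoly b c, ← h1, hyz]
  have hz0 : z = 0 := Algebra.norm_eq_zero_iff.mp hnorm
  -- z = eval a F
  set a : Fin n → L := fun i => ∑ j : Fin m, y (i, j) • b j with ha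
  have h4 : z = eval a F := by
    rw [hz, hP]
    have := eval₂Hom_bind₁ (RingHom.id L) (fun v => algebraMap K L (y v)) g F
    rw [show (eval (fun v => algebraMap K L (y v)) :
      MvPolynomial (Fin n × Fin m) L →+* L) = eval₂Hom (RingHom.id L)
        (fun v => algebraMap K L (y v)) from rfl, this]
    have hgi : ∀ i, (eval₂Hom (RingHom.id L) (fun v => algebraMap K L (y v))) (g i) = a i := by
      intro i
      rw [hg, ha]
      beta_reduce
      rw [map_sum]
      congr 1
      ext j
      rw [map_mul, eval₂Hom_C, eval₂Hom_X', RingHom.id_apply, Algebra.smul_def, mul_comm]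
    rw [show (fun i => (eval₂Hom (RingHom.id L) (fun v => algebraMap K L (y v))) (g i))
      = a from funext hgi]
    rfl
  refine ⟨a, ?_, by rw [← h4, hz0]⟩
  intro h0
  obtain ⟨⟨i, j⟩, hyv⟩ := Function.ne_iff.mp hy0
  apply hyv
  have hai : a i = 0 := congrFun h0 i
  rw [ha] at hai
  beta_reduce at hai
  exact Fintype.linearIndependent_iff.mp b.linearIndependent _ hai j

theorem lang {K : Type*} [Field K] (hK : IsC1 K) (L : Type*) [Field L] [Algebra K L]
    (halg : Algebra.IsAlgebraic K L) : IsC1 L := by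
  intro n d hd hn F hF
  set S : Set L := ↑(F.support.image fun μ => coeff μ F) with hS
  haveI : Finite S := (Finset.finite_toSet _).to_subtype
  set L₀ := IntermediateField.adjoin K S with hL₀
  haveI : FiniteDimensional K L₀ :=
    IntermediateField.finiteDimensional_adjoin
      (fun x _ => (Algebra.IsAlgebraic.isAlgebraic (R := K) x).isIntegral)
  have hinj : Function.Injective (algebraMap L₀ L) := (algebraMap L₀ L).injective
  have hrange : ∀ μ, coeff μ F ∈ Set.range (algebraMap L₀ L) := by
    intro μ
    by_cases hμ : μ ∈ F.support
    · have hmem : coeff μ F ∈ L₀ := by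
        apply IntermediateField.subset_adjoin
        rw [hS]
        exact Finset.mem_coe.mpr (Finset.mem_image.mpr ⟨μ, hμ, rfl⟩)
      exact ⟨⟨_, hmem⟩, rfl⟩
    · rw [notMem_support_iff.mp hμ]
      exact ⟨0, map_zero _⟩
  obtain ⟨F₀, hF₀⟩ := exists_map_eq _ _ hrange
  have hF₀hom : F₀.IsHomogeneous d := isHomogeneous_of_map _ hinj (by rw [hF₀]; exact hF)
  obtain ⟨a₀, ha₀0, ha₀z⟩ := lang_finite hK L₀ hd hn F₀ hF₀hom
  refine ⟨fun i => algebraMap L₀ L (a₀ i), ?_, ?_⟩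
  · intro h0
    apply ha₀0
    funext i
    exact hinj (by simpa using congrFun h0 i)
  · have hcomm : eval (fun i => algebraMap L₀ L (a₀ i)) (map (algebraMap L₀ L) F₀)
        = algebraMap L₀ L (eval a₀ F₀) := by
      rw [eval_map]
      rw [show (eval a₀ F₀) = eval₂ (RingHom.id _) a₀ F₀ from rfl]
      rw [eval₂_comp_left (algebraMap L₀ L) (RingHom.id _) a₀ F₀]
      simp only [RingHom.comp_id]
      rfl
    rw [hF₀] at hcomm
    rw [ha₀z, map_zero] at hcomm
    exact hcomm

lemma perfectClosure_isAlgebraic (K : Type*) [Field K] (p : ℕ) [Fact p.Prime] [CharP K p] :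
    letI : Algebra K (PerfectClosure K p) := (PerfectClosure.of K p).toAlgebra
    Algebra.IsAlgebraic K (PerfectClosure K p) := by
  letI : Algebra K (PerfectClosure K p) := (PerfectClosure.of K p).toAlgebra
  refine ⟨fun x => ?_⟩
  obtain ⟨⟨n', c⟩, rfl⟩ := PerfectClosure.mk_surjective (K := K) (p := p) x
  refine ⟨Polynomial.X ^ (p ^ n') - Polynomial.C c, ?_, ?_⟩
  · have hp : p ^ n' ≠ 0 := pow_ne_zero _ (Nat.Prime.ne_zero (Fact.out))
    exact (Polynomial.monic_X_pow_sub_C c hp).ne_zero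
  · rw [map_sub, map_pow, Polynomial.aeval_X, Polynomial.aeval_C]
    rw [sub_eq_zero]
    have h1 := PerfectClosure.iterate_frobenius_mk K p n' c
    have h2 : (frobenius (PerfectClosure K p) p)^[n'] (PerfectClosure.mk K p (n', c))
        = (PerfectClosure.mk K p (n', c)) ^ (p ^ n') := by
      rw [iterate_frobenius]
    rw [← h2, h1]
    rfl

/-- **Theorem (Statement 10, Lang & Tsen).** Every algebraic extension of a `C1` field is
`C1`; for `k` algebraically closed, `k(τ)` is `C1` (Tsen), and in characteristic `p > 0`
the perfect closure `k(τ)^{p^{-∞}}` is `C1`. -/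
theorem c1_algebraic_extension_and_tsen :
    (∀ (K : Type) [Field K], IsC1 K →
        ∀ (L : Type) [Field L] [Algebra K L], Algebra.IsAlgebraic K L → IsC1 L) ∧
      (∀ (k : Type) [Field k] [IsAlgClosed k], IsC1 (RatFunc k)) ∧
      (∀ (k : Type) [Field k] [IsAlgClosed k] (p : ℕ) [Fact p.Prime] [CharP k p]
          [CharP (RatFunc k) p], IsC1 (PerfectClosure (RatFunc k) p)) := by
  refine ⟨fun K _ hK L _ _ halg => lang hK L halg, fun k _ _ => tsen k, ?_⟩
  intro k _ _ p _ _ _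
  letI : Algebra (RatFunc k) (PerfectClosure (RatFunc k) p) :=
    (PerfectClosure.of (RatFunc k) p).toAlgebra
  have halg := perfectClosure_isAlgebraic (RatFunc k) p
  exact lang (tsen k) (PerfectClosure (RatFunc k) p) halg
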